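/- Let 𝒯 be a complete separable metric space. For each n ≥ 1 let N_n : Ω → ℕ be a random variable and T_i^n (i ≥ 1) be 𝒯-valued random elements, and let m_n > 0 satisfy E[N_n] = m_n and m_n → ∞. Let λ be a Borel probability measure on 𝒯. Assume: (a) for every bounded continuous g : 𝒯 → ℝ, m_n⁻¹·Σ_{i=1}^{N_n} g(T_i^n) → ∫ g dλ in probability as n → ∞; (b) the family (N_n/m_n)_{n ≥ 1} is uniformly integrable. Let g : 𝒯 → [0,∞) be bounded continuous and let g_n : 𝒯 → [0,∞) be bounded Borel functions with sup_{t ∈ 𝒯} |g_n(t) − g(t)| → 0. Then n·(1 − E[exp(−(n·m_n)⁻¹·Σ_{i=1}^{N_n} g_n(T_i^n))]) → ∫_𝒯 g dλ as n → ∞. -/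

import Mathlib

open MeasureTheory Filter Metric Topology

lemma aux_meas {Ω : Type*} [MeasurableSpace Ω] (N : Ω → ℕ) (hN : Measurable N)
    (f : ℕ → Ω → ℝ) (hf : ∀ i, Measurable (f i)) :
    Measurable fun ω => ∑ i ∈ Finset.range (N ω), f i ω := by
  have h : Measurable fun p : Ω × ℕ => ∑ i ∈ Finset.range p.2, f i p.1 :=
    measurable_from_prod_countable_left fun k => by
      simpa using Finset.measurable_sum (Finset.range k) fun i _ => hf i
  exact h.comp (measurable_id.prodMk hN)

lemma aux_exp_le (x : ℝ) : 1 - Real.exp (-x) ≤ x := by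
  nlinarith [Real.add_one_le_exp (-x)]

lemma aux_le_exp (x : ℝ) (hx : 0 ≤ x) : x - x ^ 2 ≤ 1 - Real.exp (-x) := by
  have h1 : (1 + x) * Real.exp (-x) ≤ 1 := by
    have h := Real.add_one_le_exp x
    have := Real.exp_pos (-x)
    calc (1 + x) * Real.exp (-x) ≤ Real.exp x * Real.exp (-x) := by
          apply mul_le_mul_of_nonneg_right (by linarith) this.le
      _ = 1 := by rw [← Real.exp_add]; simp
  have h2 : 1 - x ≤ Real.exp (-x) := by linarith [Real.add_one_le_exp (-x)]
  nlinarith [Real.exp_pos (-x)]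

set_option maxHeartbeats 1000000 in
/-- Laplace functional limit for triangular-array point processes
(Lemma 5.6 of the paper). -/
theorem stmt_8
    {T : Type*} [MetricSpace T] [CompleteSpace T] [TopologicalSpace.SeparableSpace T]
    [MeasurableSpace T] [BorelSpace T]
    {Ω : Type*} [MeasurableSpace Ω] (P : Measure Ω) [IsProbabilityMeasure P]
    (N : ℕ → Ω → ℕ) (hNmeas : ∀ n, Measurable (N n))
    (Tt : ℕ → ℕ → Ω → T) (hTmeas : ∀ n i, Measurable (Tt n i))
    (m : ℕ → ℝ) (hm : ∀ n, 0 < m n)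
    (hmean : ∀ n, ∫ ω, (N n ω : ℝ) ∂P = m n)
    (hmTop : Tendsto m atTop atTop)
    (lam : Measure T) [IsProbabilityMeasure lam]
    (hemp : ∀ g : T → ℝ, Continuous g → (∃ C, ∀ t, |g t| ≤ C) →
      ∀ ε > (0 : ℝ), Tendsto (fun n : ℕ =>
        P {ω | ε < |(m n)⁻¹ * (∑ i ∈ Finset.range (N n ω), g (Tt n i ω)) - ∫ t, g t ∂lam|})
        atTop (𝓝 0))
    (hUI : ∀ ε > (0 : ℝ), ∃ K : ℝ, ∀ n,
      ∫ ω, (if K < (N n ω : ℝ) / m n then (N n ω : ℝ) / m n else 0) ∂P ≤ ε)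
    (g : T → ℝ) (hgc : Continuous g) (hg0 : ∀ t, 0 ≤ g t) (hgb : ∃ C, ∀ t, g t ≤ C)
    (gn : ℕ → T → ℝ) (hgnmeas : ∀ n, Measurable (gn n)) (hgn0 : ∀ n t, 0 ≤ gn n t)
    (hgnb : ∀ n, ∃ C, ∀ t, gn n t ≤ C)
    (hgnconv : ∀ ε > (0 : ℝ), ∃ n0 : ℕ, ∀ n ≥ n0, ∀ t, |gn n t - g t| ≤ ε) :
    Tendsto (fun n : ℕ => (n : ℝ) *
        (1 - ∫ ω, Real.exp (-((n : ℝ) * m n)⁻¹ *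
          ∑ i ∈ Finset.range (N n ω), gn n (Tt n i ω)) ∂P))
      atTop (𝓝 (∫ t, g t ∂lam)) := by
  classical
  obtain ⟨C0, hC0⟩ := hgb
  set c : ℝ := ∫ t, g t ∂lam with hc
  have hglam_int : Integrable g lam := by
    refine (integrable_const |C0|).mono' hgc.measurable.aestronglyMeasurable ?_
    filter_upwards with t
    rw [Real.norm_eq_abs, abs_of_nonneg (hg0 t)]
    exact (hC0 t).trans (le_abs_self _)
  have hc0 : 0 ≤ c := integral_nonneg hg0
  have hcC : c ≤ |C0| := by
    calc c ≤ ∫ _, |C0| ∂lam :=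
          integral_mono hglam_int (integrable_const _) fun t => (hC0 t).trans (le_abs_self _)
      _ = |C0| := by simp
  set C' : ℝ := |C0| + 1 with hC'def
  have hC' : 0 < C' := by positivity
  obtain ⟨n2, hn2⟩ := hgnconv 1 one_pos
  have hgnC' : ∀ n ≥ n2, ∀ t, gn n t ≤ C' := by
    intro n hn t
    have h1 := (abs_le.mp (hn2 n hn t)).2
    have h2 := hC0 t
    have h3 := le_abs_self C0
    rw [hC'def]; linarith
  set S : ℕ → Ω → ℝ :=
    fun n ω => (m n)⁻¹ * ∑ i ∈ Finset.range (N n ω), gn n (Tt n i ω) with hSdef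
  have hSmeas : ∀ n, Measurable (S n) := fun n =>
    (aux_meas (N n) (hNmeas n) _ fun i => (hgnmeas n).comp (hTmeas n i)).const_mul _
  have hS0 : ∀ n ω, 0 ≤ S n ω := fun n ω =>
    mul_nonneg (inv_nonneg.mpr (hm n).le) (Finset.sum_nonneg fun i _ => hgn0 n _)
  have hNint : ∀ n, Integrable (fun ω => (N n ω : ℝ)) P := by
    intro n
    by_contra h
    have h0 := integral_undef h
    rw [hmean n] at h0
    exact absurd h0 (hm n).ne'
  have hNmMeas : ∀ n, Measurable (fun ω => (N n ω : ℝ) / m n) := fun n =>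
    (Measurable.of_discrete.comp (hNmeas n)).div_const _
  have hNmInt : ∀ n, Integrable (fun ω => (N n ω : ℝ) / m n) P := fun n =>
    (hNint n).div_const _
  have hNmE : ∀ n, ∫ ω, (N n ω : ℝ) / m n ∂P = 1 := by
    intro n; rw [integral_div, hmean n, div_self (hm n).ne']
  have hNm0 : ∀ n ω, 0 ≤ (N n ω : ℝ) / m n := fun n ω =>
    div_nonneg (Nat.cast_nonneg _) (hm n).le
  have hSleNm : ∀ n, n2 ≤ n → ∀ ω, S n ω ≤ C' * ((N n ω : ℝ) / m n) := by
    intro n hn ω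
    have hsum : ∑ i ∈ Finset.range (N n ω), gn n (Tt n i ω) ≤ (N n ω : ℝ) * C' := by
      have h := Finset.sum_le_card_nsmul (Finset.range (N n ω))
        (fun i => gn n (Tt n i ω)) C' (fun i _ => hgnC' n hn _)
      simpa [Finset.card_range, nsmul_eq_mul] using h
    have h1 : S n ω ≤ (m n)⁻¹ * ((N n ω : ℝ) * C') :=
      mul_le_mul_of_nonneg_left hsum (inv_nonneg.mpr (hm n).le)
    calc S n ω ≤ _ := h1
      _ = C' * ((N n ω : ℝ) / m n) := by rw [div_eq_mul_inv]; ring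
  have hSint : ∀ n, n2 ≤ n → Integrable (S n) P := by
    intro n hn
    refine ((hNmInt n).const_mul C').mono' (hSmeas n).aestronglyMeasurable ?_
    filter_upwards with ω
    rw [Real.norm_eq_abs, abs_of_nonneg (hS0 n ω)]
    exact hSleNm n hn ω
  rw [Metric.tendsto_atTop]
  intro ε hε
  obtain ⟨K, hK⟩ := hUI (ε / (4 * C')) (by positivity)
  set M : ℝ := max (C' * K) (c + 1) with hMdef
  have hMc : c + 1 ≤ M := le_max_right _ _
  have hM0 : 0 < M := lt_of_lt_of_le (by linarith) hMc
  set δ : ℝ := ε / 4 with hδdef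
  have hδ0 : 0 < δ := by positivity
  set θ : ℝ := min (δ * ε / (64 * M)) 1 with hθdef
  have hθ0 : 0 < θ := lt_min (by positivity) one_pos
  obtain ⟨n1, hn1⟩ := hgnconv θ hθ0
  have hbd : ∃ C, ∀ t, |g t| ≤ C :=
    ⟨|C0|, fun t => by rw [abs_of_nonneg (hg0 t)]; exact (hC0 t).trans (le_abs_self _)⟩
  have hA1 := hemp g hgc hbd (δ / 2) (by positivity)
  rw [← hc] at hA1
  have hev1 : ∀ᶠ n in atTop,
      P {ω | δ/2 < |(m n)⁻¹ * (∑ i ∈ Finset.range (N n ω), g (Tt n i ω)) - c|}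
        < ENNReal.ofReal (ε / (32 * M)) :=
    hA1.eventually_lt_const (ENNReal.ofReal_pos.mpr (by positivity))
  obtain ⟨n5, hn5⟩ := eventually_atTop.mp hev1
  obtain ⟨n4, hn4⟩ := exists_nat_ge (4 * M ^ 2 / ε)
  refine ⟨max (max n1 n2) (max (n4 + 1) n5), fun n hn => ?_⟩
  have hnn1 : n1 ≤ n := le_trans ((le_max_left _ _).trans (le_max_left _ _)) hn
  have hnn2 : n2 ≤ n := le_trans ((le_max_right _ _).trans (le_max_left _ _)) hn
  have hnn4 : n4 + 1 ≤ n := le_trans ((le_max_left _ _).trans (le_max_right _ _)) hn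
  have hnn5 : n5 ≤ n := le_trans ((le_max_right _ _).trans (le_max_right _ _)) hn
  have hnpos : (0 : ℝ) < n := by
    have : 1 ≤ n := le_trans (Nat.le_add_left 1 n4) hnn4
    exact_mod_cast Nat.lt_of_lt_of_le Nat.zero_lt_one this
  -- the bad event
  set A : Set Ω := {ω | δ < |S n ω - c|} with hAdef
  have hAmeas : MeasurableSet A :=
    measurableSet_lt measurable_const ((hSmeas n).sub measurable_const).abs
  set p : ℝ := (P A).toReal with hpdef
  have hp0 : 0 ≤ p := ENNReal.toReal_nonneg
  -- bound on p
  have hpbound : p < ε / (16 * M) := by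
    set A1 : Set Ω :=
      {ω | δ/2 < |(m n)⁻¹ * (∑ i ∈ Finset.range (N n ω), g (Tt n i ω)) - c|} with hA1def
    set A2 : Set Ω := {ω | δ/(2*θ) ≤ (N n ω : ℝ)/m n} with hA2def
    have hsub : A ⊆ A1 ∪ A2 := by
      intro ω hω
      by_cases h1 : δ/2 < |(m n)⁻¹ * (∑ i ∈ Finset.range (N n ω), g (Tt n i ω)) - c|
      · exact Or.inl h1
      · right
        push_neg at h1
        have hd : |S n ω - (m n)⁻¹ * (∑ i ∈ Finset.range (N n ω), g (Tt n i ω))|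
            ≤ θ * ((N n ω : ℝ)/m n) := by
          have heq : S n ω - (m n)⁻¹ * (∑ i ∈ Finset.range (N n ω), g (Tt n i ω))
              = (m n)⁻¹ * (∑ i ∈ Finset.range (N n ω), (gn n (Tt n i ω) - g (Tt n i ω))) := by
            rw [hSdef]; rw [Finset.sum_sub_distrib]; ring
          rw [heq, abs_mul, abs_of_nonneg (inv_nonneg.mpr (hm n).le)]
          have habs : |∑ i ∈ Finset.range (N n ω), (gn n (Tt n i ω) - g (Tt n i ω))|
              ≤ (N n ω : ℝ) * θ := by
            refine (Finset.abs_sum_le_sum_abs _ _).trans ?_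
            have h := Finset.sum_le_card_nsmul (Finset.range (N n ω))
              (fun i => |gn n (Tt n i ω) - g (Tt n i ω)|) θ (fun i _ => hn1 n hnn1 _)
            simpa [Finset.card_range, nsmul_eq_mul] using h
          calc (m n)⁻¹ * |∑ i ∈ Finset.range (N n ω), (gn n (Tt n i ω) - g (Tt n i ω))|
              ≤ (m n)⁻¹ * ((N n ω : ℝ) * θ) :=
                mul_le_mul_of_nonneg_left habs (inv_nonneg.mpr (hm n).le)
            _ = θ * ((N n ω : ℝ)/m n) := by rw [div_eq_mul_inv]; ring
        have hωA : δ < |S n ω - c| := hω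
        have htri : |S n ω - c| ≤ |S n ω - (m n)⁻¹ * (∑ i ∈ Finset.range (N n ω), g (Tt n i ω))|
            + |(m n)⁻¹ * (∑ i ∈ Finset.range (N n ω), g (Tt n i ω)) - c| := abs_sub_le _ _ _
        have h2 : δ/2 ≤ θ * ((N n ω : ℝ)/m n) := by linarith
        show δ/(2*θ) ≤ (N n ω : ℝ)/m n
        rw [div_le_iff₀ (by positivity)]
        nlinarith [h2]
    have hP2 : (P A2).toReal ≤ 2*θ/δ := by
      have hmar := mul_meas_ge_le_integral_of_nonneg (μ := P)
        (ae_of_all _ (hNm0 n)) (hNmInt n) (δ/(2*θ))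
      rw [hNmE n] at hmar
      have ha : (0:ℝ) < δ/(2*θ) := by positivity
      have : (P {ω | δ/(2*θ) ≤ (N n ω : ℝ)/m n}).toReal ≤ 1/(δ/(2*θ)) := by
        rw [le_div_iff₀ ha]; rw [measureReal_def] at hmar; linarith [hmar]
      rw [one_div_div] at this
      exact this
    have hP1 : (P A1).toReal < ε/(32*M) :=
      ENNReal.toReal_lt_of_lt_ofReal (hn5 n hnn5)
    have hPA : p ≤ (P A1).toReal + (P A2).toReal := by
      rw [hpdef]
      calc (P A).toReal ≤ (P A1 + P A2).toReal :=
            ENNReal.toReal_mono (by finiteness)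
              ((measure_mono hsub).trans (measure_union_le _ _))
        _ = (P A1).toReal + (P A2).toReal :=
            ENNReal.toReal_add (measure_ne_top _ _) (measure_ne_top _ _)
    have hθb : 2*θ/δ ≤ ε/(32*M) := by
      have h1 : θ ≤ δ * ε / (64 * M) := min_le_left _ _
      have h3 : 64 * M * (δ * ε / (64 * M)) = δ * ε := by field_simp
      have h2 : 64 * M * θ ≤ δ * ε := by
        calc 64 * M * θ ≤ 64 * M * (δ * ε / (64 * M)) :=
              mul_le_mul_of_nonneg_left h1 (by positivity)
          _ = δ * ε := h3
      rw [div_le_div_iff₀ hδ0 (by positivity)]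
      nlinarith
    have hhalf : ε/(32*M) + ε/(32*M) = ε/(16*M) := by field_simp; ring
    linarith
  -- rewrite the quantity as an integral
  rw [Real.dist_eq]
  set f : Ω → ℝ := fun ω => (n : ℝ) * (1 - Real.exp (-(S n ω) / n)) with hfdef
  have hexpmeas : Measurable fun ω => Real.exp (-(S n ω)/n) :=
    ((hSmeas n).neg.div_const _).exp
  have hexple : ∀ ω, Real.exp (-(S n ω)/n) ≤ 1 := by
    intro ω
    rw [Real.exp_le_one_iff]
    exact div_nonpos_of_nonpos_of_nonneg (neg_nonpos.mpr (hS0 n ω)) (Nat.cast_nonneg n)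
  have hexpint : Integrable (fun ω => Real.exp (-(S n ω)/n)) P := by
    refine (integrable_const (1:ℝ)).mono' hexpmeas.aestronglyMeasurable ?_
    filter_upwards with ω
    rw [Real.norm_eq_abs, abs_of_nonneg (Real.exp_pos _).le]
    exact hexple ω
  have hFeq : (n : ℝ) * (1 - ∫ ω, Real.exp (-((n : ℝ) * m n)⁻¹ *
      ∑ i ∈ Finset.range (N n ω), gn n (Tt n i ω)) ∂P) = ∫ ω, f ω ∂P := by
    have harg : ∀ ω, -((n : ℝ) * m n)⁻¹ *
        ∑ i ∈ Finset.range (N n ω), gn n (Tt n i ω) = -(S n ω)/n := by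
      intro ω
      rw [hSdef]
      rw [mul_inv]
      ring
    simp only [harg]
    rw [hfdef]
    rw [integral_const_mul, integral_sub (integrable_const 1) hexpint, integral_const]
    simp [measure_univ]
  rw [hFeq]
  have hfmeas : Measurable f := measurable_const.mul (hexpmeas.const_sub 1)
  have hf0 : ∀ ω, 0 ≤ f ω := fun ω =>
    mul_nonneg (Nat.cast_nonneg n) (by linarith [hexple ω])
  have hfint : Integrable f P := by
    refine (integrable_const ((n:ℝ))).mono' hfmeas.aestronglyMeasurable ?_
    filter_upwards with ω
    rw [Real.norm_eq_abs, abs_of_nonneg (hf0 ω)]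
    have h1 : 1 - Real.exp (-(S n ω)/n) ≤ 1 := by
      linarith [Real.exp_pos (-(S n ω)/n)]
    have h2 := mul_le_mul_of_nonneg_left h1 (Nat.cast_nonneg (α := ℝ) n)
    simpa using h2
  have hminmeas : Measurable fun ω => min (S n ω) M := (hSmeas n).min measurable_const
  have hmin0 : ∀ ω, 0 ≤ min (S n ω) M := fun ω => le_min (hS0 n ω) hM0.le
  have hminint : Integrable (fun ω => min (S n ω) M) P := by
    refine (integrable_const M).mono' hminmeas.aestronglyMeasurable ?_
    filter_upwards with ω
    rw [Real.norm_eq_abs, abs_of_nonneg (hmin0 ω)]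
    exact min_le_right _ _
  have hSi : Integrable (S n) P := hSint n hnn2
  -- upper bound
  have hup : ∫ ω, f ω ∂P ≤ (∫ ω, min (S n ω) M ∂P) + ε/4 := by
    have h1 : ∫ ω, f ω ∂P ≤ ∫ ω, S n ω ∂P := by
      refine integral_mono hfint hSi fun ω => ?_
      have h2 := aux_exp_le (S n ω / n)
      have h3 : -(S n ω / n) = -(S n ω)/n := by ring
      rw [h3] at h2
      have h4 := mul_le_mul_of_nonneg_left h2 hnpos.le
      have h5 : (n:ℝ) * (S n ω / n) = S n ω := by field_simp
      rw [hfdef]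
      simp only []
      linarith [h4, h5.le, h5.ge]
    have hsubint : Integrable (fun ω => S n ω - min (S n ω) M) P := hSi.sub hminint
    have h2 : ∫ ω, S n ω ∂P
        = (∫ ω, min (S n ω) M ∂P) + ∫ ω, (S n ω - min (S n ω) M) ∂P := by
      rw [← integral_add hminint hsubint]
      congr 1; ext ω; ring
    have hiteint : Integrable
        (fun ω => C' * (if K < (N n ω : ℝ)/m n then (N n ω : ℝ)/m n else 0)) P := by
      refine ((hNmInt n).const_mul C').mono' ?_ ?_
      · exact (measurable_const.mul (Measurable.ite
          (measurableSet_lt measurable_const (hNmMeas n)) (hNmMeas n)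
          measurable_const)).aestronglyMeasurable
      · filter_upwards with ω
        rw [Real.norm_eq_abs]
        split_ifs with h
        · rw [abs_of_nonneg (mul_nonneg hC'.le (hNm0 n ω))]
        · simpa using mul_nonneg hC'.le (hNm0 n ω)
    have h3 : ∫ ω, (S n ω - min (S n ω) M) ∂P
        ≤ ∫ ω, C' * (if K < (N n ω : ℝ)/m n then (N n ω : ℝ)/m n else 0) ∂P := by
      refine integral_mono (hSi.sub hminint) hiteint fun ω => ?_
      by_cases hSM : S n ω ≤ M
      · rw [min_eq_left hSM]
        simp only [sub_self]
        split_ifs with h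
        · exact mul_nonneg hC'.le (hNm0 n ω)
        · simp
      · push_neg at hSM
        rw [min_eq_right hSM.le]
        have h6 : S n ω ≤ C' * ((N n ω : ℝ)/m n) := hSleNm n hnn2 ω
        have h5 : C' * K ≤ M := le_max_left _ _
        have hx : K < (N n ω : ℝ)/m n := by
          have h7 : C' * K < C' * ((N n ω : ℝ)/m n) :=
            h5.trans_lt (hSM.trans_le h6)
          exact (mul_lt_mul_iff_right₀ hC').mp h7
        rw [if_pos hx]
        linarith
    have h4 : ∫ ω, C' * (if K < (N n ω : ℝ)/m n then (N n ω : ℝ)/m n else 0) ∂P ≤ ε/4 := by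
      rw [integral_const_mul]
      calc C' * ∫ ω, (if K < (N n ω : ℝ)/m n then (N n ω : ℝ)/m n else 0) ∂P
          ≤ C' * (ε/(4*C')) := mul_le_mul_of_nonneg_left (hK n) hC'.le
        _ = ε/4 := by field_simp
    linarith
  -- lower bound
  have hlow : (∫ ω, min (S n ω) M ∂P) - ε/4 ≤ ∫ ω, f ω ∂P := by
    have hMn : M^2 / n ≤ ε/4 := by
      have hn4' : 4*M^2/ε ≤ (n4:ℝ) := hn4
      have hnn : (n4:ℝ) + 1 ≤ (n:ℝ) := by exact_mod_cast hnn4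
      rw [div_le_iff₀ hnpos]
      rw [div_le_iff₀ hε] at hn4'
      nlinarith
    have hpt : ∀ ω, min (S n ω) M - M^2/n ≤ f ω := by
      intro ω
      set y := min (S n ω) M with hy
      have hy0 : 0 ≤ y := hmin0 ω
      have hyM : y ≤ M := min_le_right _ _
      have hyS : y ≤ S n ω := min_le_left _ _
      have e1 : Real.exp (-(S n ω)/n) ≤ Real.exp (-y/n) :=
        Real.exp_le_exp.mpr ((div_le_div_iff_of_pos_right hnpos).mpr (neg_le_neg hyS))
      have e2 : y/n - (y/n)^2 ≤ 1 - Real.exp (-(y/n)) := aux_le_exp _ (by positivity)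
      rw [← neg_div] at e2
      have e3 : (n:ℝ) * (1 - Real.exp (-y/n)) ≤ f ω := by
        rw [hfdef]
        exact mul_le_mul_of_nonneg_left (by linarith) hnpos.le
      have e4 : y - y^2/n ≤ (n:ℝ) * (1 - Real.exp (-y/n)) := by
        have h7 := mul_le_mul_of_nonneg_left e2 hnpos.le
        have heq : (n:ℝ) * (y/n - (y/n)^2) = y - y^2/n := by field_simp
        linarith
      have e5 : y^2/n ≤ M^2/n := by
        have hy2 : y^2 ≤ M^2 := by nlinarith
        exact (div_le_div_iff_of_pos_right hnpos).mpr hy2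
      linarith
    have hsubint2 : Integrable (fun ω => min (S n ω) M - M^2/n) P :=
      hminint.sub (integrable_const _)
    have h8 := integral_mono hsubint2 hfint hpt
    rw [integral_sub hminint (integrable_const _), integral_const] at h8
    simp [measure_univ] at h8
    linarith
  -- middle estimate
  have hminc : |(∫ ω, min (S n ω) M ∂P) - c| ≤ δ + 2*M*p := by
    have hcM : c ≤ M := by linarith
    have hpt : ∀ ω, |min (S n ω) M - c| ≤ δ + A.indicator (fun _ => 2*M) ω := by
      intro ω
      by_cases hω : ω ∈ A
      · rw [Set.indicator_of_mem hω]
        have h1 : |min (S n ω) M - c| ≤ 2*M := by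
          rw [abs_le]
          constructor
          · have := hmin0 ω; linarith
          · have := min_le_right (S n ω) M; linarith
        linarith
      · rw [Set.indicator_of_notMem hω]
        have hω' : |S n ω - c| ≤ δ := by
          have : ¬ δ < |S n ω - c| := hω
          linarith [not_lt.mp this]
        rcases le_total (S n ω) M with h | h
        · rw [min_eq_left h]; linarith [hω']
        · rw [min_eq_right h]
          rw [abs_of_nonneg (by linarith)]
          have h9 : S n ω - c ≤ δ := (le_abs_self _).trans hω'
          linarith
    have hindint : Integrable (A.indicator (fun _ => 2*M)) P :=
      (integrable_const (2*M)).indicator hAmeas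
    have hint2 : Integrable (fun ω => δ + A.indicator (fun _ => 2*M) ω) P :=
      (integrable_const δ).add hindint
    have h6 : ∫ ω, |min (S n ω) M - c| ∂P
        ≤ ∫ ω, (δ + A.indicator (fun _ => 2*M) ω) ∂P :=
      integral_mono ((hminint.sub (integrable_const c)).abs) hint2 hpt
    have h7 : ∫ ω, (δ + A.indicator (fun _ => 2*M) ω) ∂P = δ + 2*M*p := by
      rw [integral_add (integrable_const δ) hindint, integral_const,
        integral_indicator_const _ hAmeas]
      rw [hpdef]
      simp [measure_univ, smul_eq_mul]
      simp only [measureReal_def]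
      ring
    have h8 : |(∫ ω, min (S n ω) M ∂P) - c| ≤ ∫ ω, |min (S n ω) M - c| ∂P := by
      have h9 : (∫ ω, min (S n ω) M ∂P) - c = ∫ ω, (min (S n ω) M - c) ∂P := by
        rw [integral_sub hminint (integrable_const c), integral_const]
        simp [measure_univ]
      rw [h9]
      have := norm_integral_le_integral_norm (μ := P) (fun ω => min (S n ω) M - c)
      simpa [Real.norm_eq_abs] using this
    linarith
  -- combine
  have h2Mp : 2*M*p < ε/4 := by
    have h1 : 2*M*p < 2*M*(ε/(16*M)) := by
      exact mul_lt_mul_of_pos_left hpbound (by positivity)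
    have heq : 2*M*(ε/(16*M)) = ε/8 := by field_simp; ring
    linarith
  have habs := abs_le.mp hminc
  rw [abs_sub_lt_iff]
  constructor
  · have : (∫ ω, min (S n ω) M ∂P) - c ≤ δ + 2*M*p := habs.2
    rw [hδdef] at this
    linarith
  · have : -(δ + 2*M*p) ≤ (∫ ω, min (S n ω) M ∂P) - c := habs.1
    rw [hδdef] at this
    linarith
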